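/- Let n be a positive integer. The equation 2x^2 + 7y^2 = n has a solution in the 7-adic integers Z_7 if and only if the odd part condition holds: the Legendre symbol (n·7^{-v_7(n)} / 7) = 1. -/

import Mathlib

instance : Fact (Nat.Prime 7) := ⟨by norm_num⟩

open Polynomial

private lemma toZMod_eq_zero_iff' (x : ℤ_[7]) :
    PadicInt.toZMod x = 0 ↔ (7 : ℤ_[7]) ∣ x := by
  rw [← RingHom.mem_ker, PadicInt.ker_toZMod, IsLocalRing.mem_maximalIdeal,
    PadicInt.mem_nonunits, PadicInt.norm_lt_one_iff_dvd]
  norm_num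

private lemma lift_sq (c : ℤ_[7]) (hc : PadicInt.toZMod c ≠ 0)
    (hsq : IsSquare (PadicInt.toZMod c)) : ∃ z : ℤ_[7], z ^ 2 = c := by
  obtain ⟨r, hr⟩ := hsq
  have hr0 : r ≠ 0 := by rintro rfl; simp at hr; exact hc hr
  set a : ℤ_[7] := ((r.val : ℕ) : ℤ_[7]) with ha_def
  have ha : PadicInt.toZMod a = r := by
    simp [ha_def, map_natCast]
  set F : Polynomial ℤ_[7] := X ^ 2 - C c with hF
  have hFa : PadicInt.toZMod (F.eval a) = 0 := by
    simp [hF, ha, hr, sq]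
  have hFd : F.derivative.eval a = 2 * a := by
    simp [hF]; norm_num
  have hda : PadicInt.toZMod (F.derivative.eval a) ≠ 0 := by
    rw [hFd, map_mul, ha]
    have h2 : PadicInt.toZMod (2 : ℤ_[7]) = (2 : ZMod 7) := map_ofNat _ 2
    rw [h2]
    intro h
    rcases mul_eq_zero.mp h with h | h
    · exact absurd h (by decide)
    · exact hr0 h
  have hlt : ‖F.eval a‖ < 1 := by
    rw [PadicInt.norm_lt_one_iff_dvd]
    have := (toZMod_eq_zero_iff' _).mp hFa
    simpa using this
  have heq : ‖F.derivative.eval a‖ = 1 := by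
    refine le_antisymm (PadicInt.norm_le_one _) ?_
    by_contra h
    push_neg at h
    exact hda ((toZMod_eq_zero_iff' _).mpr
      (by simpa using (PadicInt.norm_lt_one_iff_dvd _).mp h))
  have hnorm : ‖F.eval a‖ < ‖F.derivative.eval a‖ ^ 2 := by
    rw [heq]; simpa using hlt
  obtain ⟨z, hz, -⟩ := hensels_lemma hnorm
  refine ⟨z, ?_⟩
  have : z ^ 2 - c = 0 := by simpa [hF] using hz
  exact sub_eq_zero.mp this

private lemma isUnit_two : IsUnit (2 : ℤ_[7]) := by
  rw [PadicInt.isUnit_iff]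
  refine le_antisymm (PadicInt.norm_le_one _) ?_
  by_contra h
  push_neg at h
  have hd := (toZMod_eq_zero_iff' (2 : ℤ_[7])).mpr
    (by simpa using (PadicInt.norm_lt_one_iff_dvd _).mp h)
  rw [show PadicInt.toZMod (2 : ℤ_[7]) = (2 : ZMod 7) from map_ofNat _ 2] at hd
  exact absurd hd (by decide)

private lemma seven_ne : (7 : ℤ_[7]) ≠ 0 := by norm_num

private lemma lemA (m : ℕ) (hm : ¬ 7 ∣ m) :
    (∃ x y : ℤ_[7], 2 * x ^ 2 + 7 * y ^ 2 = (m : ℤ_[7])) ↔ IsSquare ((m : ZMod 7)) := by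
  have hm0 : ((m : ZMod 7)) ≠ 0 := by
    rw [Ne, ZMod.natCast_eq_zero_iff]; exact hm
  constructor
  · rintro ⟨x, y, h⟩
    have key := congrArg PadicInt.toZMod h
    simp only [map_add, map_mul, map_pow, map_natCast, map_ofNat] at key
    rw [show ((7 : ZMod 7)) = 0 by decide] at key
    rw [zero_mul, add_zero] at key
    have : ∀ u : ZMod 7, ∃ v : ZMod 7, 2 * u ^ 2 = v * v := by decide
    obtain ⟨v, hv⟩ := this (PadicInt.toZMod x)
    exact ⟨v, by rw [← key, hv]⟩
  · intro hsq
    have h2sq : ∀ u : ZMod 7, (∃ v, u = v * v) → ∃ w : ZMod 7, 2 * u = w * w := by decide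
    obtain ⟨w, hw⟩ := h2sq _ hsq
    have hc0 : PadicInt.toZMod ((2 : ℤ_[7]) * (m : ℤ_[7])) ≠ 0 := by
      rw [map_mul, map_natCast, show PadicInt.toZMod (2 : ℤ_[7]) = (2 : ZMod 7) from map_ofNat _ 2]
      exact mul_ne_zero (by decide) hm0
    have hcs : IsSquare (PadicInt.toZMod ((2 : ℤ_[7]) * (m : ℤ_[7]))) := by
      rw [map_mul, map_natCast, show PadicInt.toZMod (2 : ℤ_[7]) = (2 : ZMod 7) from map_ofNat _ 2]
      exact ⟨w, hw⟩
    obtain ⟨z, hz⟩ := lift_sq _ hc0 hcs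
    have u2 := isUnit_two
    refine ⟨(↑u2.unit⁻¹ : ℤ_[7]) * z, 0, ?_⟩
    have h1 : (2 : ℤ_[7]) * ↑u2.unit⁻¹ = 1 := by
      have := u2.unit.mul_inv
      rwa [u2.unit_spec] at this
    linear_combination (2 * (↑u2.unit⁻¹ : ℤ_[7]) ^ 2) * hz +
      ((2 * (↑u2.unit⁻¹ : ℤ_[7]) + 1) * (m : ℤ_[7])) * h1

private lemma lemB (m : ℕ) (hm : ¬ 7 ∣ m) :
    (∃ x y : ℤ_[7], x ^ 2 + 14 * y ^ 2 = (m : ℤ_[7])) ↔ IsSquare ((m : ZMod 7)) := by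
  have hm0 : ((m : ZMod 7)) ≠ 0 := by
    rw [Ne, ZMod.natCast_eq_zero_iff]; exact hm
  constructor
  · rintro ⟨x, y, h⟩
    have key := congrArg PadicInt.toZMod h
    simp only [map_add, map_mul, map_pow, map_natCast, map_ofNat] at key
    rw [show ((14 : ZMod 7)) = 0 by decide, zero_mul, add_zero] at key
    exact ⟨PadicInt.toZMod x, by rw [← key, sq]⟩
  · intro hsq
    have hc0 : PadicInt.toZMod ((m : ℤ_[7])) ≠ 0 := by rw [map_natCast]; exact hm0
    have hcs : IsSquare (PadicInt.toZMod ((m : ℤ_[7]))) := by rw [map_natCast]; exact hsq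
    obtain ⟨z, hz⟩ := lift_sq _ hc0 hcs
    exact ⟨z, 0, by linear_combination hz⟩

private lemma descent1 (m : ℕ) :
    (∃ x y : ℤ_[7], 2 * x ^ 2 + 7 * y ^ 2 = ((7 * m : ℕ) : ℤ_[7])) ↔
      (∃ x y : ℤ_[7], x ^ 2 + 14 * y ^ 2 = (m : ℤ_[7])) := by
  constructor
  · rintro ⟨x, y, h⟩
    rw [Nat.cast_mul, Nat.cast_ofNat] at h
    have key := congrArg PadicInt.toZMod h
    simp only [map_add, map_mul, map_pow, map_natCast, map_ofNat] at key
    rw [show ((7 : ZMod 7)) = 0 by decide, zero_mul, add_zero, zero_mul] at key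
    have hx0 : PadicInt.toZMod x = 0 := by
      have h2 : (2 : ZMod 7) ≠ 0 := by decide
      have := mul_eq_zero.mp key
      rcases this with h' | h'
      · exact absurd h' h2
      · exact pow_eq_zero_iff (n := 2) (by norm_num) |>.mp h'
    obtain ⟨t, rfl⟩ := (toZMod_eq_zero_iff' x).mp hx0
    refine ⟨y, t, mul_left_cancel₀ seven_ne ?_⟩
    linear_combination h
  · rintro ⟨x, y, h⟩
    refine ⟨7 * y, x, ?_⟩
    rw [Nat.cast_mul, Nat.cast_ofNat]
    linear_combination 7 * h

private lemma descent2 (m : ℕ) :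
    (∃ x y : ℤ_[7], x ^ 2 + 14 * y ^ 2 = ((7 * m : ℕ) : ℤ_[7])) ↔
      (∃ x y : ℤ_[7], 2 * x ^ 2 + 7 * y ^ 2 = (m : ℤ_[7])) := by
  constructor
  · rintro ⟨x, y, h⟩
    rw [Nat.cast_mul, Nat.cast_ofNat] at h
    have key := congrArg PadicInt.toZMod h
    simp only [map_add, map_mul, map_pow, map_natCast, map_ofNat] at key
    rw [show ((14 : ZMod 7)) = 0 by decide, show ((7 : ZMod 7)) = 0 by decide,
      zero_mul, add_zero, zero_mul] at key
    have hx0 : PadicInt.toZMod x = 0 := pow_eq_zero_iff (n := 2) (by norm_num) |>.mp key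
    obtain ⟨t, rfl⟩ := (toZMod_eq_zero_iff' x).mp hx0
    refine ⟨y, t, mul_left_cancel₀ seven_ne ?_⟩
    linear_combination h
  · rintro ⟨x, y, h⟩
    refine ⟨7 * y, x, ?_⟩
    rw [Nat.cast_mul, Nat.cast_ofNat]
    linear_combination 7 * h

theorem local_solvability_at_seven (n : ℕ) (hn : 0 < n) :
    (∃ x y : ℤ_[7], 2 * x ^ 2 + 7 * y ^ 2 = (n : ℤ_[7])) ↔
      legendreSym 7 ((n / 7 ^ (padicValNat 7 n) : ℕ) : ℤ) = 1 := by
  induction n using Nat.strong_induction_on with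
  | _ n IH =>
    by_cases h7 : 7 ∣ n
    · by_cases h49 : 7 ^ 2 ∣ n
      · obtain ⟨k, rfl⟩ := h49
        have hk : 0 < k := Nat.pos_of_ne_zero (by rintro rfl; simp at hn)
        have hlt : k < 7 ^ 2 * k := by
          have : 7 ^ 2 * k = 49 * k := by norm_num
          omega
        have hval : padicValNat 7 (7 ^ 2 * k) = 2 + padicValNat 7 k := by
          rw [padicValNat.mul (by norm_num) (by omega), padicValNat.prime_pow]
        have hdiv : (7 ^ 2 * k) / 7 ^ (2 + padicValNat 7 k) = k / 7 ^ padicValNat 7 k := by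
          rw [pow_add]
          exact Nat.mul_div_mul_left _ _ (by norm_num)
        rw [hval, hdiv, ← IH k hlt hk]
        rw [show 7 ^ 2 * k = 7 * (7 * k) from by ring]
        rw [descent1, descent2]
      · obtain ⟨m, rfl⟩ := h7
        have hm7 : ¬ 7 ∣ m := fun hd => h49 (by obtain ⟨t, rfl⟩ := hd; ring_nf; exact ⟨t, by ring⟩)
        have hm0 : 0 < m := Nat.pos_of_ne_zero (by rintro rfl; simp at hn)
        have hval : padicValNat 7 (7 * m) = 1 := by
          rw [padicValNat.mul (by norm_num) (by omega), padicValNat.eq_zero_of_not_dvd hm7]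
          have : padicValNat 7 7 = 1 := by
            simpa using padicValNat.prime_pow (p := 7) 1
          omega
        rw [hval, pow_one, Nat.mul_div_cancel_left _ (by norm_num)]
        rw [descent1, lemB m hm7, legendreSym.eq_one_iff']
        rwa [Ne, ZMod.natCast_eq_zero_iff]
    · have hval : padicValNat 7 n = 0 := padicValNat.eq_zero_of_not_dvd h7
      rw [hval, pow_zero, Nat.div_one]
      rw [lemA n h7, legendreSym.eq_one_iff']
      rwa [Ne, ZMod.natCast_eq_zero_iff]
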